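/- The function V(x, θ) = (1/2)(x − τ₁ω/K)² + (τ₁/K) ∫₀^{θ} ( v_e(σ) − ω/K + β₀ |v_e(σ) − ω/K| ) dσ, with β₀ = 2ωK/(ω²+K²), is 2π-periodic in θ: V(x, θ + 2π) = V(x, θ) for all x, θ ∈ ℝ. -/
import Mathlib


open Real MeasureTheory Set

private lemma lin_int (A B a b : ℝ) :
    ∫ σ in a..b, (A*σ + B) = A*(b^2-a^2)/2 + B*(b-a) := by
  have h1 : IntervalIntegrable (fun σ : ℝ => A*σ) volume a b :=
    (continuous_const.mul continuous_id).intervalIntegrable _ _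
  rw [intervalIntegral.integral_add h1 intervalIntegrable_const,
      intervalIntegral.integral_const_mul, integral_id, intervalIntegral.integral_const,
      smul_eq_mul]
  ring

private lemma reduce (v : ℝ → ℝ) (hper : ∀ θ : ℝ, v (θ + 2*π) = v θ) (θ : ℝ) :
    ∃ θ' : ℝ, -(π/2) ≤ θ' ∧ θ' < 3*π/2 ∧ v θ = v θ' ∧
      θ' = θ - 2*π*(⌊(θ+π/2)/(2*π)⌋ : ℝ) := by
  have h2π : (0:ℝ) < 2*π := by positivity
  set k : ℤ := ⌊(θ+π/2)/(2*π)⌋ with hk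
  have h1 : (k:ℝ) * (2*π) ≤ θ+π/2 := (le_div_iff₀ h2π).mp (Int.floor_le _)
  have h2 : θ+π/2 < ((k:ℝ)+1) * (2*π) := (div_lt_iff₀ h2π).mp (Int.lt_floor_add_one _)
  refine ⟨θ - 2*π*(k:ℝ), by linarith, by linarith, ?_, rfl⟩
  have hp : Function.Periodic v (2*π) := hper
  have := hp.sub_int_mul_eq (x := θ) (n := k)
  rw [show θ - (k:ℝ) * (2*π) = θ - 2*π*(k:ℝ) by ring] at this
  exact this.symm

private lemma v_eq (v : ℝ → ℝ) (hper : ∀ θ : ℝ, v (θ + 2*π) = v θ)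
    (hA' : ∀ θ : ℝ, -(π/2) ≤ θ → θ ≤ π/2 → v θ = (2/π)*θ)
    (hB' : ∀ θ : ℝ, π/2 ≤ θ → θ ≤ 3*π/2 → v θ = -(2/π)*θ + 2) :
    v = fun θ => 1 - (2/π) * |π - (θ + π/2 - 2*π*(⌊(θ+π/2)/(2*π)⌋ : ℝ))| := by
  have hπ : (0:ℝ) < π := pi_pos
  funext θ
  obtain ⟨θ', hd1, hd2, hv, hθ'⟩ := reduce v hper θ
  have harg : θ + π/2 - 2*π*(⌊(θ+π/2)/(2*π)⌋ : ℝ) = θ' + π/2 := by rw [hθ']; ring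
  simp only [harg]
  rcases le_or_gt θ' (π/2) with hc | hc
  · rw [hv, hA' θ' hd1 hc, abs_of_nonneg (by linarith)]
    field_simp
    ring
  · rw [hv, hB' θ' hc.le hd2.le, abs_of_nonpos (by linarith)]
    field_simp
    ring

private lemma v_bdd (v : ℝ → ℝ) (hper : ∀ θ : ℝ, v (θ + 2*π) = v θ)
    (hA' : ∀ θ : ℝ, -(π/2) ≤ θ → θ ≤ π/2 → v θ = (2/π)*θ)
    (hB' : ∀ θ : ℝ, π/2 ≤ θ → θ ≤ 3*π/2 → v θ = -(2/π)*θ + 2) (θ : ℝ) :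
    |v θ| ≤ 1 := by
  have hπ : (0:ℝ) < π := pi_pos
  obtain ⟨θ', hd1, hd2, hv, _⟩ := reduce v hper θ
  have hmono : ∀ s t : ℝ, s ≤ t → (2/π)*s ≤ (2/π)*t := fun s t h =>
    mul_le_mul_of_nonneg_left h (by positivity)
  have e1 : (2/π)*(π/2) = 1 := by
    rw [div_mul_eq_mul_div, div_eq_one_iff_eq hπ.ne']; ring
  have e2 : (2/π)*(-(π/2)) = -1 := by
    rw [div_mul_eq_mul_div, div_eq_iff hπ.ne']; ring
  have e3 : (2/π)*(3*π/2) = 3 := by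
    rw [div_mul_eq_mul_div, div_eq_iff hπ.ne']; ring
  rw [hv, abs_le]
  rcases le_or_gt θ' (π/2) with hc | hc
  · rw [hA' θ' hd1 hc]
    constructor
    · have := hmono _ _ hd1; linarith
    · have := hmono _ _ hc; linarith
  · rw [hB' θ' hc.le hd2.le]
    constructor
    · have := hmono _ _ hd2.le; linarith
    · have := hmono _ _ hc.le; linarith

set_option maxHeartbeats 1000000 in
private lemma key_integral_zero (v : ℝ → ℝ)
    (hA' : ∀ θ : ℝ, -(π/2) ≤ θ → θ ≤ π/2 → v θ = (2/π)*θ)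
    (hB' : ∀ θ : ℝ, π/2 ≤ θ → θ ≤ 3*π/2 → v θ = -(2/π)*θ + 2)
    (c β₀ : ℝ) (hc0 : 0 < c) (hc1 : c < 1)
    (hkey : β₀ * (1 + c^2) = 2*c)
    (hint : ∀ a b : ℝ, IntervalIntegrable (fun σ => v σ - c + β₀ * |v σ - c|) volume a b) :
    (∫ σ in (-(π/2))..(3*π/2), (v σ - c + β₀ * |v σ - c|)) = 0 := by
  have hπ : (0:ℝ) < π := pi_pos
  set f : ℝ → ℝ := fun σ => v σ - c + β₀ * |v σ - c| with hf
  set m : ℝ := π*c/2 with hm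
  set m' : ℝ := π*(2-c)/2 with hm'
  have h1 : -(π/2) ≤ m := by nlinarith
  have h2 : m ≤ π/2 := by nlinarith
  have h3 : (π/2) ≤ m' := by nlinarith
  have h4 : m' ≤ 3*π/2 := by nlinarith
  -- piece 1
  have I1 : ∫ σ in (-(π/2))..m, f σ
      = ((1-β₀)*(2/π))*(m^2-(-(π/2))^2)/2 + (-(1-β₀)*c)*(m-(-(π/2))) := by
    rw [← lin_int]
    apply intervalIntegral.integral_congr
    rw [uIcc_of_le (by linarith)]
    intro σ hσ
    obtain ⟨ha, hb⟩ := hσ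
    have hv : v σ = (2/π)*σ := hA' σ ha (by linarith)
    have hg : (2/π)*σ - c ≤ 0 := by
      rw [div_mul_eq_mul_div, sub_nonpos, div_le_iff₀ hπ]
      nlinarith
    simp only [hf, hv, abs_of_nonpos hg]
    ring
  -- piece 2
  have I2 : ∫ σ in m..(π/2), f σ
      = ((1+β₀)*(2/π))*((π/2)^2-m^2)/2 + (-(1+β₀)*c)*((π/2)-m) := by
    rw [← lin_int]
    apply intervalIntegral.integral_congr
    rw [uIcc_of_le (by linarith)]
    intro σ hσ
    obtain ⟨ha, hb⟩ := hσ
    have hv : v σ = (2/π)*σ := hA' σ (by linarith) hb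
    have hg : 0 ≤ (2/π)*σ - c := by
      rw [div_mul_eq_mul_div, sub_nonneg, le_div_iff₀ hπ]
      nlinarith
    simp only [hf, hv, abs_of_nonneg hg]
    ring
  -- piece 3
  have I3 : ∫ σ in (π/2)..m', f σ
      = ((1+β₀)*(-(2/π)))*(m'^2-(π/2)^2)/2 + ((1+β₀)*(2-c))*(m'-(π/2)) := by
    rw [← lin_int]
    apply intervalIntegral.integral_congr
    rw [uIcc_of_le (by linarith)]
    intro σ hσ
    obtain ⟨ha, hb⟩ := hσ
    have hv : v σ = -(2/π)*σ + 2 := hB' σ ha (by linarith)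
    have hg : 0 ≤ -(2/π)*σ + 2 - c := by
      have : (2/π)*σ ≤ 2 - c := by
        rw [div_mul_eq_mul_div, div_le_iff₀ hπ]
        nlinarith
      linarith
    simp only [hf, hv, abs_of_nonneg hg]
    ring
  -- piece 4
  have I4 : ∫ σ in m'..(3*π/2), f σ
      = ((1-β₀)*(-(2/π)))*((3*π/2)^2-m'^2)/2 + ((1-β₀)*(2-c))*((3*π/2)-m') := by
    rw [← lin_int]
    apply intervalIntegral.integral_congr
    rw [uIcc_of_le (by linarith)]
    intro σ hσ
    obtain ⟨ha, hb⟩ := hσ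
    have hv : v σ = -(2/π)*σ + 2 := hB' σ (by linarith) hb
    have hg : -(2/π)*σ + 2 - c ≤ 0 := by
      have : 2 - c ≤ (2/π)*σ := by
        rw [div_mul_eq_mul_div, le_div_iff₀ hπ]
        nlinarith
      linarith
    simp only [hf, hv, abs_of_nonpos hg]
    ring
  have split : ∫ σ in (-(π/2))..(3*π/2), f σ
      = (∫ σ in (-(π/2))..m, f σ) + (∫ σ in m..(π/2), f σ)
        + (∫ σ in (π/2)..m', f σ) + (∫ σ in m'..(3*π/2), f σ) := by
    rw [intervalIntegral.integral_add_adjacent_intervals (hint _ _) (hint _ _),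
        intervalIntegral.integral_add_adjacent_intervals (hint _ _) (hint _ _),
        intervalIntegral.integral_add_adjacent_intervals (hint _ _) (hint _ _)]
  rw [split, I1, I2, I3, I4, hm, hm']
  have hπ' : π ≠ 0 := hπ.ne'
  have hE : ((1-β₀)*(2/π))*((π*c/2)^2-(-(π/2))^2)/2 + (-(1-β₀)*c)*((π*c/2)-(-(π/2)))
      + (((1+β₀)*(2/π))*((π/2)^2-(π*c/2)^2)/2 + (-(1+β₀)*c)*((π/2)-(π*c/2)))
      + (((1+β₀)*(-(2/π)))*((π*(2-c)/2)^2-(π/2)^2)/2 + ((1+β₀)*(2-c))*((π*(2-c)/2)-(π/2)))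
      + (((1-β₀)*(-(2/π)))*((3*π/2)^2-(π*(2-c)/2)^2)/2
          + ((1-β₀)*(2-c))*((3*π/2)-(π*(2-c)/2)))
      = π*(β₀*(1+c^2) - 2*c) := by
    field_simp
    ring
  rw [hE, hkey]
  ring

/-- The Lyapunov function V(x, θ) is 2π-periodic in θ. -/
theorem lyapunov_periodic (v : ℝ → ℝ)
    (hper : ∀ θ : ℝ, v (θ + 2*π) = v θ)
    (hA : ∀ θ : ℝ, -(π/2) ≤ θ → θ < π/2 → v θ = (2/π)*θ)
    (hB : ∀ θ : ℝ, π/2 ≤ θ → θ < 3*π/2 → v θ = -(2/π)*θ + 2)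
    (τ₁ K ω β₀ : ℝ) (hτ₁ : 0 < τ₁) (hK : 0 < K) (hω0 : 0 < ω) (hωK : ω < K)
    (hβ₀ : β₀ = 2*ω*K/(ω^2 + K^2)) :
    ∀ x θ : ℝ,
      (1/2)*(x - τ₁*ω/K)^2
        + (τ₁/K) * ∫ σ in (0:ℝ)..(θ + 2*π), (v σ - ω/K + β₀ * |v σ - ω/K|)
      = (1/2)*(x - τ₁*ω/K)^2
        + (τ₁/K) * ∫ σ in (0:ℝ)..θ, (v σ - ω/K + β₀ * |v σ - ω/K|) := by
  have hπ : (0:ℝ) < π := pi_pos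
  -- closed-interval versions of hA, hB
  have hA' : ∀ θ : ℝ, -(π/2) ≤ θ → θ ≤ π/2 → v θ = (2/π)*θ := by
    intro θ h1 h2
    rcases lt_or_eq_of_le h2 with h | h
    · exact hA θ h1 h
    · subst h
      rw [hB _ le_rfl (by linarith)]
      field_simp
      ring
  have hB' : ∀ θ : ℝ, π/2 ≤ θ → θ ≤ 3*π/2 → v θ = -(2/π)*θ + 2 := by
    intro θ h1 h2
    rcases lt_or_eq_of_le h2 with h | h
    · exact hB θ h1 h
    · subst h
      have h3 : v (3*π/2) = v (-(π/2)) := by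
        rw [show (3*π/2 : ℝ) = -(π/2) + 2*π by ring, hper]
      rw [h3, hA _ le_rfl (by linarith)]
      field_simp
      ring
  set c : ℝ := ω/K with hc
  have hc0 : 0 < c := div_pos hω0 hK
  have hc1 : c < 1 := (div_lt_one hK).mpr hωK
  have hβpos : 0 ≤ β₀ := by rw [hβ₀]; positivity
  set f : ℝ → ℝ := fun σ => v σ - c + β₀ * |v σ - c| with hf
  -- measurability
  have hmeasv : Measurable v := by
    rw [v_eq v hper hA' hB']
    apply Measurable.const_sub
    apply Measurable.const_mul
    apply Measurable.abs
    apply Measurable.const_sub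
    apply Measurable.sub
    · exact (measurable_id.add_const _)
    · exact measurable_const.mul
        (measurable_from_top.comp
          (Measurable.floor ((measurable_id.add_const _).div_const _)))
  have hmeasf : Measurable f := by
    apply Measurable.add
    · exact hmeasv.sub_const _
    · exact (((hmeasv.sub_const _).abs).const_mul _)
  -- integrability
  have hint : ∀ a b : ℝ, IntervalIntegrable f volume a b := by
    intro a b
    apply IntervalIntegrable.mono_fun' (g := fun _ => (1+β₀)*(1+c))
      intervalIntegrable_const hmeasf.aestronglyMeasurable.restrict
    filter_upwards with σ
    have hb := v_bdd v hper hA' hB' σ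
    have h1 : |v σ - c| ≤ 1 + c := by
      calc |v σ - c| ≤ |v σ| + |c| := abs_sub _ _
        _ ≤ 1 + c := by rw [abs_of_pos hc0]; linarith
    have h2 : |f σ| ≤ (1+β₀)*(1+c) := by
      calc |f σ| ≤ |v σ - c| + abs (β₀ * |v σ - c|) := abs_add_le _ _
        _ = |v σ - c| + β₀ * |v σ - c| := by
            rw [abs_mul, abs_of_nonneg hβpos, abs_abs]
        _ ≤ (1+β₀)*(1+c) := by nlinarith [abs_nonneg (v σ - c)]
    rw [Real.norm_eq_abs]; exact h2
  -- key algebraic identity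
  have hkey : β₀ * (1 + c^2) = 2*c := by
    rw [hβ₀, hc]
    have h1 : K ≠ 0 := hK.ne'
    have h2 : ω^2 + K^2 ≠ 0 := by positivity
    field_simp
    ring
  intro x θ
  congr 1
  have hperf : Function.Periodic f (2*π) := by
    intro σ; simp only [hf, hper]
  have hzero : (∫ σ in (-(π/2))..(3*π/2), f σ) = 0 :=
    key_integral_zero v hA' hB' c β₀ hc0 hc1 hkey hint
  have hadj : (∫ σ in (0:ℝ)..θ, f σ) + (∫ σ in θ..(θ+2*π), f σ)
      = ∫ σ in (0:ℝ)..(θ+2*π), f σ :=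
    intervalIntegral.integral_add_adjacent_intervals (hint _ _) (hint _ _)
  have hshift : (∫ σ in θ..(θ+2*π), f σ) = ∫ σ in (-(π/2))..(-(π/2)+2*π), f σ :=
    hperf.intervalIntegral_add_eq θ (-(π/2))
  rw [show (-(π/2)+2*π : ℝ) = 3*π/2 by ring] at hshift
  rw [hshift, hzero] at hadj
  rw [← hadj]
  ring
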